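/- arXiv:1707.05712 — 2 statements merged into one kernel-verified Lean document; each statement's English description precedes it below -/
import Mathlib

section
/- Theorem 2 (Mansour et al. domain adaptation bound): if H is symmetric, h*_S ∈ H minimizes R_S over H, and h*_T ∈ H minimizes R_T over H, then for every h ∈ H, R_T(h) − R_T(h*_T) ≤ R_{S_X}(h*_S, h) + sup_{(h₁,h₂)∈H²} |R_{T_X}(h₁,h₂) − R_{S_X}(h₁,h₂)| + R_{S_X}(h*_S, h*_T). -/
open MeasureTheory Real

noncomputable section

/-- The 0-1 loss on labels in `{−1,+1}`, encoded by `Bool` (`false ↦ −1`, `true ↦ +1`). -/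
def l01 (a b : Bool) : ℝ := if a = b then 0 else 1

variable {X : Type*} [MeasurableSpace X]

/-- The expected error `R_P(h)` of a hypothesis `h` on a domain `P` over `X × Y`. -/
def risk (P : Measure (X × Bool)) (h : X → Bool) : ℝ := ∫ z, l01 (h z.1) z.2 ∂P

/-- The expected disagreement `R_{D_X}(h,h')` of two hypotheses on a marginal `D_X`. -/
def disag (D : Measure X) (h h' : X → Bool) : ℝ := ∫ x, l01 (h x) (h' x) ∂D

lemma l01_nonneg (a b : Bool) : 0 ≤ l01 a b := by
  unfold l01; split <;> norm_num

lemma l01_le_one (a b : Bool) : l01 a b ≤ 1 := by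
  unfold l01; split <;> norm_num

lemma l01_comm (a b : Bool) : l01 a b = l01 b a := by
  cases a <;> cases b <;> simp [l01]

lemma l01_tri (a b c : Bool) : l01 a c ≤ l01 a b + l01 b c := by
  cases a <;> cases b <;> cases c <;> simp [l01] <;> norm_num

lemma l01_sub_le (a b c : Bool) : l01 a c - l01 b c ≤ l01 a b := by
  cases a <;> cases b <;> cases c <;> simp [l01] <;> norm_num

lemma meas_l01 {α : Type*} [MeasurableSpace α] {f g : α → Bool}
    (hf : Measurable f) (hg : Measurable g) :
    Measurable fun x => l01 (f x) (g x) := by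
  unfold l01
  exact Measurable.ite (measurableSet_eq_fun hf hg)
    measurable_const measurable_const

lemma intg_l01 {α : Type*} [MeasurableSpace α] (μ : Measure α) [IsFiniteMeasure μ]
    {f g : α → Bool} (hf : Measurable f) (hg : Measurable g) :
    Integrable (fun x => l01 (f x) (g x)) μ := by
  refine (integrable_const (1 : ℝ)).mono' (meas_l01 hf hg).aestronglyMeasurable ?_
  filter_upwards with x
  rw [Real.norm_eq_abs, abs_of_nonneg (l01_nonneg _ _)]
  exact l01_le_one _ _

lemma disag_nonneg (D : Measure X) (f g : X → Bool) : 0 ≤ disag D f g :=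
  integral_nonneg fun x => l01_nonneg _ _

lemma disag_le_one (D : Measure X) [IsProbabilityMeasure D] (f g : X → Bool) :
    disag D f g ≤ 1 := by
  have := norm_integral_le_of_norm_le_const (μ := D)
    (f := fun x => l01 (f x) (g x)) (C := 1) (by
      filter_upwards with x
      rw [Real.norm_eq_abs, abs_of_nonneg (l01_nonneg _ _)]
      exact l01_le_one _ _)
  simpa [disag, measure_univ] using (le_of_abs_le (by simpa [Real.norm_eq_abs] using this))

/-- Theorem 2 (Mansour et al. domain adaptation bound): if `H` is symmetric,
`h*_S ∈ H` minimizes `R_S` over `H` and `h*_T ∈ H` minimizes `R_T` over `H`,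
then for every `h ∈ H`,
`R_T(h) − R_T(h*_T) ≤ R_{S_X}(h*_S,h) + sup_{(h₁,h₂)∈H²} |R_{T_X}(h₁,h₂) − R_{S_X}(h₁,h₂)|
  + R_{S_X}(h*_S,h*_T)`. -/
theorem mansour_da_bound
    (S T : Measure (X × Bool)) [IsProbabilityMeasure S] [IsProbabilityMeasure T]
    (H : Set (X → Bool)) (hHmeas : ∀ h ∈ H, Measurable h)
    (hHsym : ∀ h ∈ H, (fun x => !(h x)) ∈ H)
    (hS hT : X → Bool) (hhS : hS ∈ H) (hhT : hT ∈ H)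
    (hSmin : ∀ g ∈ H, risk S hS ≤ risk S g)
    (hTmin : ∀ g ∈ H, risk T hT ≤ risk T g)
    (h : X → Bool) (hh : h ∈ H) :
    risk T h - risk T hT ≤ disag (S.map Prod.fst) hS h
      + (⨆ h₁ ∈ H, ⨆ h₂ ∈ H,
          |disag (T.map Prod.fst) h₁ h₂ - disag (S.map Prod.fst) h₁ h₂|)
      + disag (S.map Prod.fst) hS hT := by
  have hmh := hHmeas h hh
  have hmS := hHmeas hS hhS
  have hmT := hHmeas hT hhT
  set D := S.map Prod.fst with hD
  set E := T.map Prod.fst with hE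
  haveI : IsProbabilityMeasure D := Measure.isProbabilityMeasure_map measurable_fst.aemeasurable
  haveI : IsProbabilityMeasure E := Measure.isProbabilityMeasure_map measurable_fst.aemeasurable
  set f : (X → Bool) → (X → Bool) → ℝ :=
    fun a b => |disag E a b - disag D a b| with hf
  -- Step A: risk T h - risk T hT ≤ disag E h hT
  have stepA : risk T h - risk T hT ≤ disag E h hT := by
    have hint1 : Integrable (fun z : X × Bool => l01 (h z.1) z.2) T :=
      intg_l01 T (hmh.comp measurable_fst) measurable_snd
    have hint2 : Integrable (fun z : X × Bool => l01 (hT z.1) z.2) T :=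
      intg_l01 T (hmT.comp measurable_fst) measurable_snd
    have hint3 : Integrable (fun z : X × Bool => l01 (h z.1) (hT z.1)) T :=
      intg_l01 T (hmh.comp measurable_fst) (hmT.comp measurable_fst)
    have : risk T h - risk T hT
        = ∫ z, (l01 (h z.1) z.2 - l01 (hT z.1) z.2) ∂T := by
      rw [risk, risk, integral_sub hint1 hint2]
    rw [this]
    have hle : ∫ z, (l01 (h z.1) z.2 - l01 (hT z.1) z.2) ∂T
        ≤ ∫ z, l01 (h z.1) (hT z.1) ∂T :=
      integral_mono (hint1.sub hint2) hint3 fun z => l01_sub_le _ _ _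
    refine hle.trans_eq ?_
    rw [hE, disag, integral_map measurable_fst.aemeasurable
      (meas_l01 hmh hmT).aestronglyMeasurable]
  -- Step B: disag E h hT ≤ disag D h hT + f h hT
  have stepB : disag E h hT ≤ disag D h hT + f h hT := by
    have := le_abs_self (disag E h hT - disag D h hT)
    simp only [hf]; linarith
  -- Step C: f h hT ≤ sup
  have hfb : ∀ a b : X → Bool, f a b ≤ 2 := by
    intro a b
    have h1 := disag_nonneg E a b
    have h2 := disag_le_one E a b
    have h3 := disag_nonneg D a b
    have h4 := disag_le_one D a b
    rw [hf, abs_le]; constructor <;> linarith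
  have stepC : f h hT ≤ ⨆ h₁ ∈ H, ⨆ h₂ ∈ H, f h₁ h₂ := by
    have inner : ∀ a : X → Bool, a ∈ H → f a hT ≤ ⨆ h₂ ∈ H, f a h₂ := by
      intro a _
      have hbdd : BddAbove (Set.range fun h₂ => ⨆ _ : h₂ ∈ H, f a h₂) := by
        refine ⟨2, ?_⟩
        rintro _ ⟨b, rfl⟩
        exact Real.iSup_le (fun _ => hfb a b) (by norm_num)
      calc f a hT = ⨆ _ : hT ∈ H, f a hT := (ciSup_pos (f := fun _ : hT ∈ H => f a hT) hhT).symm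
        _ ≤ ⨆ h₂ ∈ H, f a h₂ := le_ciSup hbdd hT
    have hbdd2 : BddAbove (Set.range fun h₁ => ⨆ h₂ ∈ H, f h₁ h₂) := by
      refine ⟨2, ?_⟩
      rintro _ ⟨a, rfl⟩
      exact Real.iSup_le
        (fun b => Real.iSup_le (fun _ => hfb a b) (by norm_num)) (by norm_num)
    calc f h hT ≤ ⨆ h₂ ∈ H, f h h₂ := inner h hh
      _ = ⨆ _ : h ∈ H, ⨆ h₂ ∈ H, f h h₂ := (ciSup_pos (f := fun _ : h ∈ H => ⨆ h₂ ∈ H, f h h₂) hh).symm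
      _ ≤ ⨆ h₁ ∈ H, ⨆ h₂ ∈ H, f h₁ h₂ := by
          refine le_ciSup (f := fun h₁ => ⨆ _ : h₁ ∈ H, ⨆ h₂ ∈ H, f h₁ h₂) ?_ h
          refine ⟨2, ?_⟩
          rintro _ ⟨a, rfl⟩
          exact Real.iSup_le (fun _ => Real.iSup_le
            (fun b => Real.iSup_le (fun _ => hfb a b) (by norm_num)) (by norm_num))
            (by norm_num)
    -- note: the middle and last steps handle the Prop-indexed sup
  -- Step D: disag D h hT ≤ disag D hS h + disag D hS hT
  have stepD : disag D h hT ≤ disag D hS h + disag D hS hT := by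
    have htri : disag D h hT ≤ disag D h hS + disag D hS hT := by
      rw [disag, disag, disag, ← integral_add (intg_l01 D hmh hmS) (intg_l01 D hmS hmT)]
      exact integral_mono (intg_l01 D hmh hmT)
        ((intg_l01 D hmh hmS).add (intg_l01 D hmS hmT)) fun x => l01_tri _ _ _
    have hcomm : disag D h hS = disag D hS h := by
      rw [disag, disag]
      exact integral_congr_ae (Filter.Eventually.of_forall fun x => l01_comm _ _)
    linarith
  linarith

end
end

section
/- Expected disagreement of the Gaussian linear posterior (Equation (19)): for any marginal distribution D_X on ℝ^d with D_X-almost surely x ≠ 0 and any w ∈ ℝ^d, the expected disagreement satisfies d_{D_X}(ρ_w) = E_{x~D_X} Φ_d((w·x)/‖x‖), where Φ_d(z) = 2·Φ(z)·Φ(−z). -/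
open MeasureTheory

noncomputable section

/-- The real value of a label: `true ↦ +1`, `false ↦ −1`. -/
def yval (b : Bool) : ℝ := if b then 1 else -1

variable {d : ℕ}

/-- Dot product on `ℝ^d`. -/
def dotp (w x : Fin d → ℝ) : ℝ := ∑ i, w i * x i

/-- Euclidean norm on `ℝ^d`. -/
def nrm (x : Fin d → ℝ) : ℝ := Real.sqrt (∑ i, x i ^ 2)

open Classical in
/-- The linear classifier `h_w(x) = sign(w·x)` (`true ↦ +1`, `false ↦ −1`). -/
def hlin (w x : Fin d → ℝ) : Bool := if 0 < dotp w x then true else false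

/-- The Gaussian measure `γ_w` on `ℝ^d` with mean `w` and identity covariance, given as the
product over coordinates of one-dimensional Gaussians `N(w_i, 1)`. -/
def gauss (w : Fin d → ℝ) : Measure (Fin d → ℝ) :=
  Measure.pi fun i => ProbabilityTheory.gaussianReal (w i) 1

/-- The standard Gaussian tail function `Φ(z) = (1/√(2π)) ∫_z^∞ e^{−t²/2} dt`. -/
def gaussTail (z : ℝ) : ℝ :=
  ∫ t in Set.Ici z, Real.exp (-t ^ 2 / 2) / Real.sqrt (2 * Real.pi)

/-- `Φ_d(z) = 2·Φ(z)·Φ(−z)`. -/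
def PhiDis (z : ℝ) : ℝ := 2 * gaussTail z * gaussTail (-z)

section Aux
open ProbabilityTheory Real
open scoped NNReal ENNReal

lemma pdf_prod_identity (m₁ m₂ : ℝ) {v₁ v₂ : ℝ≥0} (h₁ : v₁ ≠ 0) (h₂ : v₂ ≠ 0) (z a : ℝ) :
    gaussianPDFReal m₁ v₁ a * gaussianPDFReal (m₂ + a) v₂ z
      = gaussianPDFReal (m₁ + m₂) (v₁ + v₂) z *
        gaussianPDFReal ((m₁ * (v₂:ℝ) + (z - m₂) * (v₁:ℝ)) / ((v₁:ℝ) + (v₂:ℝ)))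
          (v₁ * v₂ / (v₁ + v₂)) a := by
  have hv₁ : (0:ℝ) < (v₁:ℝ) := by positivity
  have hv₂ : (0:ℝ) < (v₂:ℝ) := by positivity
  have hs : (0:ℝ) < (v₁:ℝ) + (v₂:ℝ) := by linarith
  simp only [gaussianPDFReal]
  push_cast
  rw [mul_mul_mul_comm, mul_mul_mul_comm ((√(2 * π * ((v₁:ℝ)+(v₂:ℝ))))⁻¹)]
  congr 1
  · rw [← mul_inv, ← mul_inv, ← Real.sqrt_mul (by positivity), ← Real.sqrt_mul (by positivity)]
    congr 2
    field_simp
  · rw [← Real.exp_add, ← Real.exp_add]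
    congr 1
    field_simp
    ring

lemma measurable_pdf2 (m₂ : ℝ) (v₂ : ℝ≥0) :
    Measurable (fun p : ℝ × ℝ => gaussianPDF (m₂ + p.1) v₂ p.2) := by
  simp only [gaussianPDF_def, gaussianPDFReal_def]
  fun_prop

lemma gauss_conv (m₁ m₂ : ℝ) (v₁ v₂ : ℝ≥0) :
    ((gaussianReal m₁ v₁).prod (gaussianReal m₂ v₂)).map (fun p : ℝ × ℝ => p.1 + p.2)
      = gaussianReal (m₁ + m₂) (v₁ + v₂) := by
  by_cases h₁ : v₁ = 0
  · subst h₁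
    rw [gaussianReal_zero_var, Measure.dirac_prod, Measure.map_map measurable_add measurable_prodMk_left]
    have : ((fun p : ℝ × ℝ => p.1 + p.2) ∘ Prod.mk m₁) = (m₁ + ·) := rfl
    rw [this, ProbabilityTheory.gaussianReal_map_const_add, add_comm m₂ m₁, zero_add]
  by_cases h₂ : v₂ = 0
  · subst h₂
    rw [gaussianReal_zero_var, Measure.prod_dirac, Measure.map_map measurable_add (measurable_prodMk_right)]
    have : ((fun p : ℝ × ℝ => p.1 + p.2) ∘ (fun x => (x, m₂))) = (· + m₂) := rfl
    rw [this, ProbabilityTheory.gaussianReal_map_add_const, add_zero]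
  have hs0 : v₁ + v₂ ≠ 0 := by simp [h₁, h₂]
  ext s hs
  rw [Measure.map_apply measurable_add hs, Measure.prod_apply (measurable_add hs)]
  have key : ∀ a : ℝ, (gaussianReal m₂ v₂) (Prod.mk a ⁻¹' ((fun p : ℝ × ℝ => p.1 + p.2) ⁻¹' s))
      = gaussianReal (m₂ + a) v₂ s := by
    intro a
    rw [← ProbabilityTheory.gaussianReal_map_const_add (μ := m₂) (v := v₂) a,
      Measure.map_apply (measurable_const_add a) hs]
    rfl
  simp_rw [key, fun a : ℝ => ProbabilityTheory.gaussianReal_apply (m₂ + a) h₂ s]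
  have hmeas : Measurable fun a : ℝ => ∫⁻ z in s, gaussianPDF (m₂ + a) v₂ z :=
    Measurable.lintegral_prod_right (measurable_pdf2 m₂ v₂)
  rw [ProbabilityTheory.gaussianReal_of_var_ne_zero m₁ h₁,
    lintegral_withDensity_eq_lintegral_mul _ (ProbabilityTheory.measurable_gaussianPDF m₁ v₁) hmeas]
  simp only [Pi.mul_apply]
  simp_rw [← lintegral_const_mul _ (ProbabilityTheory.measurable_gaussianPDF _ v₂)]
  rw [lintegral_lintegral_swap (((ProbabilityTheory.measurable_gaussianPDF m₁ v₁).comp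
      measurable_fst |>.mul (measurable_pdf2 m₂ v₂)).aemeasurable)]
  have hvc : (v₁ * v₂ / (v₁ + v₂)) ≠ 0 := by
      simp only [ne_eq, div_eq_zero_iff, mul_eq_zero, not_or]
      exact ⟨⟨h₁, h₂⟩, hs0⟩
  have inner : ∀ z : ℝ, ∫⁻ a, gaussianPDF m₁ v₁ a * gaussianPDF (m₂ + a) v₂ z
        = gaussianPDF (m₁ + m₂) (v₁ + v₂) z := by
    intro z
    simp_rw [gaussianPDF, ← ENNReal.ofReal_mul (ProbabilityTheory.gaussianPDFReal_nonneg m₁ v₁ _)]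
    simp_rw [fun a : ℝ => pdf_prod_identity m₁ m₂ h₁ h₂ z a]
    simp_rw [ENNReal.ofReal_mul (ProbabilityTheory.gaussianPDFReal_nonneg (m₁+m₂) (v₁+v₂) z)]
    rw [lintegral_const_mul _ ((ProbabilityTheory.measurable_gaussianPDFReal _ _).ennreal_ofReal),
      ProbabilityTheory.lintegral_gaussianPDFReal_eq_one _ hvc, mul_one]
  simp_rw [inner]
  rw [← ProbabilityTheory.gaussianReal_apply _ hs0 s]


instance instProbGauss {d : ℕ} (w : Fin d → ℝ) : IsProbabilityMeasure (gauss w) := by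
  unfold gauss; infer_instance

lemma measurable_dotp {d : ℕ} (x : Fin d → ℝ) : Measurable (fun u : Fin d → ℝ => dotp u x) := by
  unfold dotp
  exact Finset.measurable_sum _ fun i _ => (measurable_pi_apply i).mul_const _

lemma gauss_map_dotp (d : ℕ) (w x : Fin d → ℝ) :
    (gauss w).map (fun u => dotp u x)
      = ProbabilityTheory.gaussianReal (dotp w x) ⟨∑ i, x i ^ 2, by positivity⟩ := by
  induction d with
  | zero =>
      have h0 : (fun u : Fin 0 → ℝ => dotp u x) = fun _ => (0:ℝ) := by
        funext u; simp [dotp]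
      rw [h0, Measure.map_const, measure_univ, one_smul]
      have : dotp w x = 0 := by simp [dotp]
      rw [this]
      have : (⟨∑ i : Fin 0, x i ^ 2, by positivity⟩ : ℝ≥0) = 0 := by
        ext; simp
      rw [this]; exact (ProbabilityTheory.gaussianReal_zero_var 0).symm
  | succ n ih =>
      have hmp := measurePreserving_piFinSuccAbove
        (fun i : Fin (n+1) => ProbabilityTheory.gaussianReal (w i) 1) 0
      set e := MeasurableEquiv.piFinSuccAbove (fun _ : Fin (n+1) => ℝ) 0
      have hg : (fun u : Fin (n+1) → ℝ => dotp u x)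
          = (fun p : ℝ × (Fin n → ℝ) => p.1 * x 0 + dotp p.2 (Fin.tail x)) ∘ e := by
        funext u
        simp only [Function.comp_apply, e, MeasurableEquiv.piFinSuccAbove_apply]
        rw [dotp, dotp, Fin.sum_univ_succ]
        rfl
      have hsum : (fun p : ℝ × (Fin n → ℝ) => p.1 * x 0 + dotp p.2 (Fin.tail x))
          = (fun q : ℝ × ℝ => q.1 + q.2) ∘ (Prod.map (· * x 0) (fun u => dotp u (Fin.tail x))) := rfl
      have hm1 : Measurable (fun p : ℝ × (Fin n → ℝ) => p.1 * x 0 + dotp p.2 (Fin.tail x)) :=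
        (measurable_fst.mul_const _).add ((measurable_dotp _).comp measurable_snd)
      rw [hg, ← Measure.map_map hm1 e.measurable]
      have hpi : (gauss w).map e
          = (ProbabilityTheory.gaussianReal (w 0) 1).prod (gauss (Fin.tail w)) := by
        rw [show (gauss w) = Measure.pi (fun i : Fin (n+1) => ProbabilityTheory.gaussianReal (w i) 1) from rfl,
          hmp.map_eq]
        rfl
      rw [hpi, hsum, ← Measure.map_map measurable_add
          ((measurable_mul_const (x 0)).prodMap (measurable_dotp (Fin.tail x))),
        ← Measure.map_prod_map _ _ (measurable_mul_const (x 0)) (measurable_dotp (Fin.tail x)),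
        ProbabilityTheory.gaussianReal_map_mul_const (x 0), ih (Fin.tail w) (Fin.tail x)]
      refine (gauss_conv _ _ _ _).trans ?_
      congr 1
      · rw [dotp, dotp, Fin.sum_univ_succ]
        simp only [Fin.tail]
        ring
      · ext
        change x 0 ^ 2 * 1 + ∑ i, Fin.tail x i ^ 2 = ∑ i, x i ^ 2
        rw [Fin.sum_univ_succ]
        simp [Fin.tail]

lemma stdGauss_Ici (z : ℝ) :
    ((ProbabilityTheory.gaussianReal 0 1) (Set.Ici z)).toReal = gaussTail z := by
  rw [ProbabilityTheory.gaussianReal_apply_eq_integral 0 one_ne_zero (Set.Ici z)]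
  have hi : ∀ t : ℝ, gaussianPDFReal 0 1 t = Real.exp (-t ^ 2 / 2) / Real.sqrt (2 * Real.pi) := by
    intro t
    simp [gaussianPDFReal, div_eq_inv_mul, mul_comm]
  rw [ENNReal.toReal_ofReal (integral_nonneg fun t => ProbabilityTheory.gaussianPDFReal_nonneg 0 1 t), gaussTail]
  exact setIntegral_congr_fun measurableSet_Ici fun t _ => hi t

lemma stdGauss_singleton (a : ℝ) : (ProbabilityTheory.gaussianReal 0 1) {a} = 0 :=
  ProbabilityTheory.gaussianReal_absolutelyContinuous 0 one_ne_zero (volume_singleton)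

lemma stdGauss_Ioi (z : ℝ) :
    ((ProbabilityTheory.gaussianReal 0 1) (Set.Ioi z)).toReal = gaussTail z := by
  rw [← stdGauss_Ici]
  congr 1
  rw [← Set.Ioi_union_left, measure_union (by simp) (measurableSet_singleton z),
    stdGauss_singleton, add_zero]

lemma gaussTail_add (z : ℝ) : gaussTail z + gaussTail (-z) = 1 := by
  have hmap := ProbabilityTheory.gaussianReal_map_const_mul (μ := 0) (v := 1) (-1)
  have hIic : ((ProbabilityTheory.gaussianReal 0 1) (Set.Iic z)).toReal = gaussTail (-z) := by
    rw [← stdGauss_Ici (-z)]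
    congr 1
    conv_rhs => rw [show (ProbabilityTheory.gaussianReal 0 1) = (ProbabilityTheory.gaussianReal 0 1).map ((-1 : ℝ) * ·) by
      rw [hmap]; norm_num]
    rw [Measure.map_apply (measurable_const_mul _) measurableSet_Ici]
    congr 1
    ext t
    simp only [Set.mem_preimage, Set.mem_Ici, Set.mem_Iic]
    constructor <;> intro h <;> linarith
  have := measure_union_add_inter (μ := ProbabilityTheory.gaussianReal 0 1) (t := Set.Iic z) (Set.Ici z) measurableSet_Iic
  rw [show Set.Ici z ∪ Set.Iic z = Set.univ from by ext t; simp [le_total z t],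
    Set.Ici_inter_Iic, Set.Icc_self, measure_univ, stdGauss_singleton, add_zero] at this
  have h1 : ((ProbabilityTheory.gaussianReal 0 1) (Set.Ici z)).toReal
      + ((ProbabilityTheory.gaussianReal 0 1) (Set.Iic z)).toReal = 1 := by
    rw [← ENNReal.toReal_add (measure_ne_top _ _) (measure_ne_top _ _), ← this]
    simp
  rw [stdGauss_Ici, hIic] at h1
  exact h1

lemma gaussReal_Ioi_toReal (m σ : ℝ) (hσ : 0 < σ) :
    ((ProbabilityTheory.gaussianReal m ⟨σ^2, sq_nonneg σ⟩) (Set.Ioi 0)).toReal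
      = gaussTail (-(m/σ)) := by
  have hv : (⟨σ^2, sq_nonneg σ⟩ : NNReal) ≠ 0 := by
    intro h
    have h2 := congrArg NNReal.toReal h
    change σ ^ 2 = 0 at h2
    nlinarith
  have hmap : ((ProbabilityTheory.gaussianReal m ⟨σ^2, sq_nonneg σ⟩).map (· + -m)).map (· * σ⁻¹)
      = ProbabilityTheory.gaussianReal 0 1 := by
    rw [show (ProbabilityTheory.gaussianReal m ⟨σ^2, sq_nonneg σ⟩).map (· + -m) = ProbabilityTheory.gaussianReal (m + -m) ⟨σ^2, sq_nonneg σ⟩ from ProbabilityTheory.gaussianReal_map_add_const _, add_neg_cancel,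
      show (ProbabilityTheory.gaussianReal 0 ⟨σ^2, sq_nonneg σ⟩).map (· * σ⁻¹) = ProbabilityTheory.gaussianReal (σ⁻¹ * 0) (.mk (σ⁻¹ ^ 2) (sq_nonneg _) * ⟨σ^2, sq_nonneg σ⟩) from ProbabilityTheory.gaussianReal_map_mul_const _]
    congr 1
    · simp
    · ext
      push_cast
      field_simp
      change 1 / σ ^ 2 * σ ^ 2 = 1
      field_simp
  rw [← stdGauss_Ioi]
  congr 1
  rw [← hmap, Measure.map_map (measurable_mul_const _) (measurable_add_const _),
    Measure.map_apply (by fun_prop) measurableSet_Ioi]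
  congr 1
  ext y
  simp only [Set.mem_preimage, Function.comp_apply, Set.mem_Ioi]
  rw [show -(m/σ) = (0 + -m) * σ⁻¹ by field_simp; ring]
  exact ⟨fun h => (mul_lt_mul_iff_left₀ (inv_pos.mpr hσ)).mpr (by linarith),
    fun h => by linarith [(mul_lt_mul_iff_left₀ (inv_pos.mpr hσ)).mp h]⟩

end Aux

section Main
open ProbabilityTheory Real
open scoped NNReal

lemma measurable_dotp_pair {d : ℕ} :
    Measurable (fun q : (Fin d → ℝ) × (Fin d → ℝ) => dotp q.1 q.2) := by
  unfold dotp
  exact Finset.measurable_sum _ fun i _ =>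
    ((measurable_pi_apply i).comp measurable_fst).mul ((measurable_pi_apply i).comp measurable_snd)

lemma measurable_l01F (d : ℕ) :
    Measurable (fun q : ((Fin d → ℝ) × (Fin d → ℝ)) × (Fin d → ℝ) =>
      l01 (hlin q.1.1 q.2) (hlin q.1.2 q.2)) := by
  classical
  have hd1 : Measurable fun q : ((Fin d → ℝ) × (Fin d → ℝ)) × (Fin d → ℝ) => dotp q.1.1 q.2 :=
    measurable_dotp_pair.comp ((measurable_fst.comp measurable_fst).prodMk measurable_snd)
  have hd2 : Measurable fun q : ((Fin d → ℝ) × (Fin d → ℝ)) × (Fin d → ℝ) => dotp q.1.2 q.2 :=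
    measurable_dotp_pair.comp ((measurable_snd.comp measurable_fst).prodMk measurable_snd)
  have heq : (fun q : ((Fin d → ℝ) × (Fin d → ℝ)) × (Fin d → ℝ) =>
        l01 (hlin q.1.1 q.2) (hlin q.1.2 q.2))
      = fun q => if ((0 < dotp q.1.1 q.2) = (0 < dotp q.1.2 q.2)) then (0:ℝ) else 1 := by
    funext q
    by_cases h1 : 0 < dotp q.1.1 q.2 <;> by_cases h2 : 0 < dotp q.1.2 q.2 <;>
      simp [l01, hlin, h1, h2]
  rw [heq]
  refine Measurable.ite ?_ measurable_const measurable_const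
  have hset : {q : ((Fin d → ℝ) × (Fin d → ℝ)) × (Fin d → ℝ) |
        (0 < dotp q.1.1 q.2) = (0 < dotp q.1.2 q.2)}
      = ((fun q : ((Fin d → ℝ) × (Fin d → ℝ)) × (Fin d → ℝ) => dotp q.1.1 q.2) ⁻¹' Set.Ioi 0
            ∩ (fun q => dotp q.1.2 q.2) ⁻¹' Set.Ioi 0)
        ∪ (((fun q : ((Fin d → ℝ) × (Fin d → ℝ)) × (Fin d → ℝ) => dotp q.1.1 q.2) ⁻¹' Set.Ioi 0)ᶜ
            ∩ ((fun q => dotp q.1.2 q.2) ⁻¹' Set.Ioi 0)ᶜ) := by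
    ext q
    simp only [Set.mem_setOf_eq, Set.mem_union, Set.mem_inter_iff, Set.mem_preimage,
      Set.mem_Ioi, Set.mem_compl_iff, eq_iff_iff]
    tauto
  rw [hset]
  exact ((hd1 measurableSet_Ioi).inter (hd2 measurableSet_Ioi)).union
    (((hd1 measurableSet_Ioi).compl).inter ((hd2 measurableSet_Ioi).compl))

lemma l01_bound (a b : Bool) : ‖l01 a b‖ ≤ 1 := by
  simp only [l01]; split <;> simp

lemma inner_disagree {d : ℕ} (w x : Fin d → ℝ) (hx : x ≠ 0) :
    ∫ u, ∫ v, l01 (hlin u x) (hlin v x) ∂(gauss w) ∂(gauss w)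
      = PhiDis (dotp w x / nrm x) := by
  classical
  have hσpos : 0 < nrm x := by
    obtain ⟨i, hi⟩ : ∃ i, x i ≠ 0 := by
      by_contra h; push_neg at h; exact hx (funext h)
    have hsum : 0 < ∑ i, x i ^ 2 :=
      Finset.sum_pos' (fun j _ => sq_nonneg _) ⟨i, Finset.mem_univ i, by positivity⟩
    exact Real.sqrt_pos.mpr hsum
  have hσ2 : nrm x ^ 2 = ∑ i, x i ^ 2 := Real.sq_sqrt (by positivity)
  set S : Set (Fin d → ℝ) := (fun u => dotp u x) ⁻¹' Set.Ioi 0 with hS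
  have hSm : MeasurableSet S := measurable_dotp x measurableSet_Ioi
  set z := dotp w x / nrm x with hz
  set p := ((gauss w) S).toReal with hpdef
  set q := ((gauss w) Sᶜ).toReal with hqdef
  have hp : p = gaussTail (-z) := by
    rw [hpdef, hS, ← Measure.map_apply (measurable_dotp x) measurableSet_Ioi, gauss_map_dotp]
    have hveq : (⟨∑ i, x i ^ 2, by positivity⟩ : ℝ≥0) = ⟨(nrm x)^2, sq_nonneg _⟩ := by
      ext; simp [hσ2]
    rw [hveq, gaussReal_Ioi_toReal _ _ hσpos, hz]
  have hq : q = gaussTail z := by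
    have h1 : q = 1 - p := by
      rw [hqdef, prob_compl_eq_one_sub hSm,
        ENNReal.toReal_sub_of_le prob_le_one (by simp), ENNReal.toReal_one, hpdef]
    have := gaussTail_add z
    rw [h1, hp]; linarith
  have key1 : ∀ u, ∫ v, l01 (hlin u x) (hlin v x) ∂(gauss w)
      = if hlin u x = true then q else p := by
    intro u
    by_cases hu : hlin u x = true
    · rw [if_pos hu, hu]
      have hfun : (fun v => l01 true (hlin v x)) = Sᶜ.indicator (fun _ => (1:ℝ)) := by
        funext v
        by_cases hv : 0 < dotp v x <;>
          simp [l01, hlin, hv, Set.indicator, hS]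
      rw [hfun, integral_indicator hSm.compl, setIntegral_const, smul_eq_mul, mul_one, measureReal_def, hqdef]
    · rw [if_neg hu, Bool.not_eq_true] at *
      rw [hu]
      have hfun : (fun v => l01 false (hlin v x)) = S.indicator (fun _ => (1:ℝ)) := by
        funext v
        by_cases hv : 0 < dotp v x <;>
          simp [l01, hlin, hv, Set.indicator, hS]
      rw [hfun, integral_indicator hSm, setIntegral_const, smul_eq_mul, mul_one, measureReal_def, hpdef]
  rw [integral_congr_ae (Filter.Eventually.of_forall key1)]
  have hfun2 : (fun u => if hlin u x = true then q else p)
      = fun u => q * S.indicator (fun _ => (1:ℝ)) u + p * Sᶜ.indicator (fun _ => (1:ℝ)) u := by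
    funext u
    by_cases hu : 0 < dotp u x <;> simp [hlin, hu, Set.indicator, hS]
  rw [hfun2, integral_add (((integrable_const (1:ℝ)).indicator hSm).const_mul q)
      (((integrable_const (1:ℝ)).indicator hSm.compl).const_mul p),
    integral_const_mul, integral_const_mul, integral_indicator hSm,
    integral_indicator hSm.compl, setIntegral_const, setIntegral_const]
  simp only [smul_eq_mul, mul_one, measureReal_def, ← hpdef, ← hqdef]
  rw [hp, hq, PhiDis]
  ring

end Main

/-- Expected disagreement of the Gaussian linear posterior (Equation (19)): for any marginal
`D_X` on `ℝ^d` with `D_X`-almost surely `x ≠ 0` and any `w ∈ ℝ^d`,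
`d_{D_X}(ρ_w) = E_{x~D_X} Φ_d((w·x)/‖x‖)` where `Φ_d(z) = 2·Φ(z)·Φ(−z)`. -/
theorem gaussian_expected_disagreement (d : ℕ) (w : Fin d → ℝ)
    (D : Measure (Fin d → ℝ)) [IsProbabilityMeasure D] (hD : ∀ᵐ x ∂D, x ≠ 0) :
    ∫ p, ∫ x, l01 (hlin p.1 x) (hlin p.2 x) ∂D ∂((gauss w).prod (gauss w))
      = ∫ x, PhiDis (dotp w x / nrm x) ∂D := by
  have hF := measurable_l01F d
  have hint : Integrable (Function.uncurry fun (p : (Fin d → ℝ) × (Fin d → ℝ))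
      (x : Fin d → ℝ) => l01 (hlin p.1 x) (hlin p.2 x)) (((gauss w).prod (gauss w)).prod D) :=
    ⟨hF.aestronglyMeasurable,
      HasFiniteIntegral.of_bounded (C := 1) (Filter.Eventually.of_forall fun q => l01_bound _ _)⟩
  rw [integral_integral_swap hint]
  refine integral_congr_ae ?_
  filter_upwards [hD] with x hx
  have hintx : Integrable (fun p : (Fin d → ℝ) × (Fin d → ℝ) => l01 (hlin p.1 x) (hlin p.2 x))
      ((gauss w).prod (gauss w)) :=
    ⟨(hF.comp (measurable_id.prodMk measurable_const)).aestronglyMeasurable,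
      HasFiniteIntegral.of_bounded (C := 1) (Filter.Eventually.of_forall fun q => l01_bound _ _)⟩
  rw [integral_prod _ hintx]
  exact inner_disagree w x hx

end
end
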